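/- Under the same hypotheses, the germ G_A is maximal: if (k_L,k_R) ∈ ℝ² satisfies H_L(k_L)=H_R(k_R) (with k_L ∈ [a_L,c_L], k_R ∈ [a_R,c_R]) and the dissipation inequality sgn(k_L−k̂_L)(H_L(k_L)−H_L(k̂_L)) ≥ sgn(k_R−k̂_R)(H_R(k_R)−H_R(k̂_R)) holds for every (k̂_L,k̂_R) ∈ G_A, then (k_L,k_R) ∈ G_A. -/
import Mathlib


open Set

/-- The germ $\mathcal G_A$ is maximal: any pair in the box satisfying Rankine-Hugoniot and
the dissipation inequality against every element of $\mathcal G_A$ belongs to $\mathcal G_A$. -/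
theorem germ_maximal
    (aL bL cL aR bR cR δ A : ℝ)
    (HL HR : ℝ → ℝ)
    (haL : aL < bL) (hbL : bL < cL) (haR : aR < bR) (hbR : bR < cR)
    (hδ : 0 < δ)
    (hCL : ContDiffOn ℝ 2 HL (Icc aL cL)) (hCR : ContDiffOn ℝ 2 HR (Icc aR cR))
    (hconvL : ∀ x ∈ Icc aL cL, δ ≤ deriv (deriv HL) x)
    (hconvR : ∀ x ∈ Icc aR cR, δ ≤ deriv (deriv HR) x)
    (hdecL : StrictAntiOn HL (Icc aL bL)) (hincL : StrictMonoOn HL (Icc bL cL))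
    (hdecR : StrictAntiOn HR (Icc aR bR)) (hincR : StrictMonoOn HR (Icc bR cR))
    (h0La : HL aL = 0) (h0Lc : HL cL = 0) (h0Ra : HR aR = 0) (h0Rc : HR cR = 0)
    (hA : A ∈ Icc (max (HL bL) (HR bR)) 0)
    (GA : Set (ℝ × ℝ))
    (hGA : GA = {k : ℝ × ℝ | k.1 ∈ Icc aL cL ∧ k.2 ∈ Icc aR cR ∧
        HR k.2 = HL k.1 ∧
        HL k.1 = max (max A (HL (max k.1 bL))) (HR (min k.2 bR))}) :
    ∀ k : ℝ × ℝ, k.1 ∈ Icc aL cL → k.2 ∈ Icc aR cR → HL k.1 = HR k.2 →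
      (∀ k' ∈ GA,
        Real.sign (k.2 - k'.2) * (HR k.2 - HR k'.2) ≤
          Real.sign (k.1 - k'.1) * (HL k.1 - HL k'.1)) →
      k ∈ GA := by

  subst hGA
  intro k hk1 hk2 hRH hdiss
  obtain ⟨hk1a, hk1c⟩ := hk1
  obtain ⟨hk2a, hk2c⟩ := hk2
  have hcontL : ContinuousOn HL (Icc aL cL) := hCL.continuousOn
  have hcontR : ContinuousOn HR (Icc aR cR) := hCR.continuousOn
  have hbLA : HL bL ≤ A := le_trans (le_max_left _ _) hA.1
  have hbRA : HR bR ≤ A := le_trans (le_max_right _ _) hA.1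
  -- p ∈ [aL, bL] with HL p = A
  obtain ⟨p, hpmem, hpA⟩ :
      ∃ p ∈ Icc aL bL, HL p = A := by
    have h := intermediate_value_Icc' haL.le
      (hcontL.mono (Icc_subset_Icc le_rfl hbL.le))
    have hAmem : A ∈ Icc (HL bL) (HL aL) := ⟨hbLA, by rw [h0La]; exact hA.2⟩
    obtain ⟨p, hp, hpA⟩ := h hAmem
    exact ⟨p, hp, hpA⟩
  -- q ∈ [bR, cR] with HR q = A
  obtain ⟨q, hqmem, hqA⟩ :
      ∃ q ∈ Icc bR cR, HR q = A := by
    have h := intermediate_value_Icc hbR.le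
      (hcontR.mono (Icc_subset_Icc haR.le le_rfl))
    have hAmem : A ∈ Icc (HR bR) (HR cR) := ⟨hbRA, by rw [h0Rc]; exact hA.2⟩
    obtain ⟨q, hq, hqA⟩ := h hAmem
    exact ⟨q, hq, hqA⟩
  -- q' ∈ [aR, bR] with HR q' = A
  obtain ⟨q', hq'mem, hq'A⟩ :
      ∃ q' ∈ Icc aR bR, HR q' = A := by
    have h := intermediate_value_Icc' haR.le
      (hcontR.mono (Icc_subset_Icc le_rfl hbR.le))
    have hAmem : A ∈ Icc (HR bR) (HR aR) := ⟨hbRA, by rw [h0Ra]; exact hA.2⟩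
    obtain ⟨q', hq, hqA⟩ := h hAmem
    exact ⟨q', hq, hqA⟩
  -- the stationary element (p, q) ∈ GA
  have hmem1 : (p, q) ∈ {k : ℝ × ℝ | k.1 ∈ Icc aL cL ∧ k.2 ∈ Icc aR cR ∧
      HR k.2 = HL k.1 ∧
      HL k.1 = max (max A (HL (max k.1 bL))) (HR (min k.2 bR))} := by
    refine ⟨⟨hpmem.1, hpmem.2.trans hbL.le⟩, ⟨haR.le.trans hqmem.1, hqmem.2⟩, ?_, ?_⟩
    · simp only [hqA, hpA]
    · simp only [max_eq_right hpmem.2, min_eq_right hqmem.1, hpA]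
      rw [max_eq_left hbLA, max_eq_left hbRA]
  -- the element (p, q') ∈ GA
  have hmem2 : (p, q') ∈ {k : ℝ × ℝ | k.1 ∈ Icc aL cL ∧ k.2 ∈ Icc aR cR ∧
      HR k.2 = HL k.1 ∧
      HL k.1 = max (max A (HL (max k.1 bL))) (HR (min k.2 bR))} := by
    refine ⟨⟨hpmem.1, hpmem.2.trans hbL.le⟩, ⟨hq'mem.1, hq'mem.2.trans hbR.le⟩, ?_, ?_⟩
    · simp only [hq'A, hpA]
    · simp only [max_eq_right hpmem.2, min_eq_left hq'mem.2, hpA, hq'A]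
      rw [max_eq_left hbLA, max_self]
  -- Claim 1 : A ≤ HL k.1
  have hAv : A ≤ HL k.1 := by
    by_contra hlt
    push_neg at hlt
    have hk1p : p < k.1 := by
      by_contra h
      push_neg at h
      rcases lt_or_eq_of_le h with h | h
      · have := hdecL ⟨hk1a, (h.le.trans hpmem.2)⟩ hpmem h
        rw [hpA] at this; linarith
      · rw [h, hpA] at hlt; linarith
    have hk2q : k.2 < q := by
      by_contra h
      push_neg at h
      rcases lt_or_eq_of_le h with h | h
      · have := hincR ⟨hqmem.1, hqmem.2⟩ ⟨hqmem.1.trans h.le, hk2c⟩ h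
        rw [hqA, ← hRH] at this; linarith
      · rw [hRH, ← h, hqA] at hlt; linarith
    have := hdiss (p, q) hmem1
    simp only [Real.sign_of_pos (sub_pos.mpr hk1p),
      Real.sign_of_neg (sub_neg.mpr hk2q), hpA, hqA, ← hRH] at this
    linarith
  refine ⟨⟨hk1a, hk1c⟩, ⟨hk2a, hk2c⟩, hRH.symm, ?_⟩
  rcases le_or_gt bL k.1 with h1 | h1
  · rw [max_eq_left h1, max_eq_right hAv]
    have h2 : HR (min k.2 bR) ≤ HL k.1 := by
      rcases le_or_gt k.2 bR with h2 | h2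
      · rw [min_eq_left h2, ← hRH]
      · rw [min_eq_right h2.le]; linarith
    rw [max_eq_left h2]
  · rw [max_eq_right h1.le]
    rcases le_or_gt k.2 bR with h2 | h2
    · rw [min_eq_left h2, ← hRH, max_eq_left hbLA, max_eq_right hAv]
    · -- case k.1 < bL, bR < k.2 : show HL k.1 = A
      have hvA : HL k.1 ≤ A := by
        by_contra hlt
        push_neg at hlt
        have hk1p : k.1 < p := by
          by_contra h
          push_neg at h
          rcases lt_or_eq_of_le h with h | h
          · have := hdecL hpmem ⟨hpmem.1.trans h.le, h1.le⟩ h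
            rw [hpA] at this; linarith
          · rw [← h, hpA] at hlt; linarith
        have hk2q : q' < k.2 := lt_of_le_of_lt hq'mem.2 h2
        have := hdiss (p, q') hmem2
        simp only [Real.sign_of_neg (sub_neg.mpr hk1p),
          Real.sign_of_pos (sub_pos.mpr hk2q), hpA, hq'A, ← hRH] at this
        linarith
      have hveq : HL k.1 = A := le_antisymm hvA hAv
      rw [min_eq_right h2.le, max_eq_left hbLA, max_eq_left hbRA, hveq]
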